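/- Let κ > 0, φ > 0 and ν > 0. Then for every h ∈ ℝ² with h ≠ 0 and every i ∈ {1,2}, the Matérn covariance function C_κ^ν on ℝ² is partially differentiable at h and ∂C_κ^ν/∂h_i (h) = −(h_i/(2ν))·C_κ^{ν−1}(h). (This is the derivative relation used in the paper's recipe for computing covariance functions of nested SPDE fields in ℝ², expressing the derivative of a Matérn covariance function via a Matérn covariance with shape parameter lowered by one.) -/

import Mathlib

open Real

/-- The modified Bessel function of the second kind,
`K_ν(x) = ∫₀^∞ exp(−x cosh t) cosh(νt) dt`. -/
noncomputable def besselK (ν x : ℝ) : ℝ :=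
  ∫ t in Set.Ioi (0 : ℝ), Real.exp (-x * Real.cosh t) * Real.cosh (ν * t)

/-- The Matérn covariance function on `ℝ²` with scale `κ`, variance parameter `φ²` and
shape parameter `ν`:
`C_κ^ν(h) = (2^{1−ν}φ²/(4π Γ(ν+1) κ^{2ν})) (κ‖h‖)^ν K_ν(κ‖h‖)`. -/
noncomputable def matern (κ φ ν : ℝ) (h : EuclideanSpace ℝ (Fin 2)) : ℝ :=
  2 ^ (1 - ν) * φ ^ 2 / (4 * π * Real.Gamma (ν + 1) * κ ^ (2 * ν)) *
    (κ * ‖h‖) ^ ν * besselK ν (κ * ‖h‖)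

/-- The partial derivative of `g : ℝ² → ℝ` in the `i`-th coordinate direction. -/
noncomputable def pderiv2 (i : Fin 2) (g : EuclideanSpace ℝ (Fin 2) → ℝ) :
    EuclideanSpace ℝ (Fin 2) → ℝ :=
  fun x => fderiv ℝ g x (EuclideanSpace.single i 1)

section Aux
set_option linter.unusedVariables false
open MeasureTheory Filter Set Asymptotics Topology


lemma cosh_le_exp_abs (y : ℝ) : Real.cosh y ≤ Real.exp |y| := by
  rw [← Real.cosh_abs, Real.cosh_eq]
  linarith [Real.exp_le_exp.2 (neg_le_self (abs_nonneg y))]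

lemma exp_half_le_cosh (y : ℝ) : Real.exp y / 2 ≤ Real.cosh y := by
  rw [Real.cosh_eq]
  have := Real.exp_pos (-y)
  linarith

lemma aux_tendsto {x c : ℝ} (hx : 0 < x) :
    Tendsto (fun t => Real.exp (c * t - x * Real.exp t)) atTop (𝓝 0) := by
  apply Real.tendsto_exp_atBot.comp
  have h0 : Tendsto (fun t : ℝ => c * (t * Real.exp (-t)) - x) atTop (𝓝 (c * 0 - x)) := by
    exact ((Real.tendsto_pow_mul_exp_neg_atTop_nhds_zero 1).congr (fun t => by rw [pow_one])).const_mul c |>.sub_const x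
  have h1 : Tendsto (fun t : ℝ => Real.exp t * (c * (t * Real.exp (-t)) - x)) atTop atBot :=
    Filter.Tendsto.atTop_mul_neg (by linarith : c * 0 - x < 0) Real.tendsto_exp_atTop h0
  refine h1.congr (fun t => ?_)
  have he : Real.exp t * Real.exp (-t) = 1 := by rw [← Real.exp_add]; simp
  have h2 : Real.exp t * (c * (t * Real.exp (-t)) - x)
      = c * t * (Real.exp t * Real.exp (-t)) - x * Real.exp t := by ring
  rw [h2, he, mul_one]

lemma integrand_tendsto (μ : ℝ) {x : ℝ} (hx : 0 < x) :
    Tendsto (fun t => Real.exp (-x * Real.cosh t) * Real.cosh (μ * t) * Real.exp t)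
      atTop (𝓝 0) := by
  apply squeeze_zero' (g := fun t => Real.exp ((|μ| + 1) * t - x / 2 * Real.exp t))
  · filter_upwards with t; positivity
  · filter_upwards [eventually_ge_atTop (0 : ℝ)] with t ht
    have h1 : Real.exp (-x * Real.cosh t) ≤ Real.exp (-(x / 2) * Real.exp t) := by
      apply Real.exp_le_exp.2; nlinarith [exp_half_le_cosh t]
    have h2 : Real.cosh (μ * t) ≤ Real.exp (|μ| * t) := by
      calc Real.cosh (μ * t) ≤ Real.exp |μ * t| := cosh_le_exp_abs _
        _ = Real.exp (|μ| * t) := by rw [abs_mul, abs_of_nonneg ht]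
    calc Real.exp (-x * Real.cosh t) * Real.cosh (μ * t) * Real.exp t
        ≤ Real.exp (-(x / 2) * Real.exp t) * Real.exp (|μ| * t) * Real.exp t := by
          refine mul_le_mul (mul_le_mul h1 h2 (Real.cosh_pos _).le (Real.exp_pos _).le)
            le_rfl (Real.exp_pos _).le (by positivity)
      _ = Real.exp ((|μ| + 1) * t - x / 2 * Real.exp t) := by
          rw [← Real.exp_add, ← Real.exp_add]; ring_nf
  · exact aux_tendsto (by linarith)

lemma besselK_integrableOn (μ : ℝ) {x : ℝ} (hx : 0 < x) :
    IntegrableOn (fun t => Real.exp (-x * Real.cosh t) * Real.cosh (μ * t)) (Ioi (0 : ℝ)) := by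
  apply integrable_of_isBigO_exp_neg one_pos (Continuous.continuousOn (by continuity))
  rw [Asymptotics.isBigO_iff]
  refine ⟨1, ?_⟩
  filter_upwards [(integrand_tendsto μ hx).eventually_le_const one_pos] with t ht
  have he : Real.exp t * Real.exp (-1 * t) = 1 := by rw [← Real.exp_add]; norm_num
  rw [Real.norm_eq_abs, Real.norm_eq_abs, abs_of_nonneg (by positivity : 
    (0:ℝ) ≤ Real.exp (-x * Real.cosh t) * Real.cosh (μ * t)), Real.abs_exp, one_mul]
  nlinarith [ht, he, Real.exp_pos t, Real.exp_pos (-1 * t),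
    mul_nonneg (Real.exp_pos (-x * Real.cosh t)).le (Real.cosh_pos (x := μ * t)).le]


lemma cosh_mul_cosh (ν t : ℝ) :
    Real.cosh t * Real.cosh (ν * t)
      = (Real.cosh ((ν + 1) * t) + Real.cosh ((ν - 1) * t)) / 2 := by
  rw [show (ν + 1) * t = ν * t + t by ring, show (ν - 1) * t = ν * t - t by ring,
    Real.cosh_add, Real.cosh_sub]; ring

lemma sinh_mul_sinh (ν t : ℝ) :
    Real.sinh t * Real.sinh (ν * t)
      = (Real.cosh ((ν + 1) * t) - Real.cosh ((ν - 1) * t)) / 2 := by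
  rw [show (ν + 1) * t = ν * t + t by ring, show (ν - 1) * t = ν * t - t by ring,
    Real.cosh_add, Real.cosh_sub]; ring

lemma besselK_hasDerivAt (ν : ℝ) {x : ℝ} (hx : 0 < x) :
    HasDerivAt (fun y => besselK ν y)
      (-((besselK (ν + 1) x + besselK (ν - 1) x) / 2)) x := by
  have hcont : ∀ y : ℝ, Continuous fun t => Real.exp (-y * Real.cosh t) * Real.cosh (ν * t) :=
    fun y => by continuity
  have hcont' : Continuous fun t : ℝ =>
      -(Real.cosh t * (Real.exp (-x * Real.cosh t) * Real.cosh (ν * t))) := by continuity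
  have key := hasDerivAt_integral_of_dominated_loc_of_deriv_le
    (F := fun y t => Real.exp (-y * Real.cosh t) * Real.cosh (ν * t))
    (F' := fun y t => -(Real.cosh t * (Real.exp (-y * Real.cosh t) * Real.cosh (ν * t))))
    (μ := volume.restrict (Ioi (0 : ℝ))) (x₀ := x)
    (bound := fun t => Real.cosh t * (Real.exp (-(x / 2) * Real.cosh t) * Real.cosh (ν * t)))
    (Metric.ball_mem_nhds x (half_pos hx))
    (Filter.Eventually.of_forall fun y => (hcont y).aestronglyMeasurable)
    (besselK_integrableOn ν hx)
    hcont'.aestronglyMeasurable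
    ?_ ?_ ?_
  · have h2 : (∫ t in Ioi (0 : ℝ),
        -(Real.cosh t * (Real.exp (-x * Real.cosh t) * Real.cosh (ν * t))))
        = -((besselK (ν + 1) x + besselK (ν - 1) x) / 2) := by
      have heq : (fun t : ℝ => -(Real.cosh t * (Real.exp (-x * Real.cosh t) * Real.cosh (ν * t))))
          = fun t : ℝ => -((Real.exp (-x * Real.cosh t) * Real.cosh ((ν + 1) * t)
              + Real.exp (-x * Real.cosh t) * Real.cosh ((ν - 1) * t)) / 2) := by
        funext t
        have := cosh_mul_cosh ν t
        nlinarith [this, Real.exp_pos (-x * Real.cosh t)]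
      rw [heq, MeasureTheory.integral_neg, MeasureTheory.integral_div,
        MeasureTheory.integral_add (besselK_integrableOn (ν + 1) hx)
          (besselK_integrableOn (ν - 1) hx)]
      rfl
    exact h2 ▸ key.2
  · refine Filter.Eventually.of_forall fun t => fun y hy => ?_
    have hy2 : x / 2 ≤ y := by
      have := abs_lt.1 (mem_ball_iff_norm.1 hy)
      linarith [this.1]
    rw [norm_neg, Real.norm_eq_abs, abs_of_nonneg (by positivity)]
    have : Real.exp (-y * Real.cosh t) ≤ Real.exp (-(x / 2) * Real.cosh t) :=
      Real.exp_le_exp.2 (by nlinarith [Real.cosh_pos (x := t)])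
    exact mul_le_mul_of_nonneg_left (mul_le_mul_of_nonneg_right this
      (Real.cosh_pos (x := ν * t)).le) (Real.cosh_pos (x := t)).le
  · have : (fun t : ℝ => Real.cosh t * (Real.exp (-(x / 2) * Real.cosh t) * Real.cosh (ν * t)))
        = fun t : ℝ => (Real.exp (-(x / 2) * Real.cosh t) * Real.cosh ((ν + 1) * t)
            + Real.exp (-(x / 2) * Real.cosh t) * Real.cosh ((ν - 1) * t)) / 2 := by
      funext t
      rw [show Real.cosh t * (Real.exp (-(x / 2) * Real.cosh t) * Real.cosh (ν * t))
        = Real.exp (-(x / 2) * Real.cosh t) * (Real.cosh t * Real.cosh (ν * t)) by ring,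
        cosh_mul_cosh]; ring
    rw [this]
    exact ((besselK_integrableOn (ν + 1) (half_pos hx)).add
      (besselK_integrableOn (ν - 1) (half_pos hx))).div_const 2
  · refine Filter.Eventually.of_forall fun t => fun y hy => ?_
    have h1 : HasDerivAt (fun y : ℝ => -y * Real.cosh t) (-Real.cosh t) y := by
      simpa using ((hasDerivAt_id y).neg.mul_const (Real.cosh t))
    have := (h1.exp).mul_const (Real.cosh (ν * t))
    refine this.congr_deriv (Eq.symm ?_)
    ring

lemma sinh_tendsto (ν : ℝ) {x : ℝ} (hx : 0 < x) :
    Tendsto (fun t => Real.exp (-x * Real.cosh t) * Real.sinh (ν * t)) atTop (𝓝 0) := by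
  refine squeeze_zero_norm' ?_ (integrand_tendsto ν hx)
  · filter_upwards [eventually_ge_atTop (0 : ℝ)] with t ht
    rw [Real.norm_eq_abs, abs_mul, Real.abs_exp]
    have hs : |Real.sinh (ν * t)| ≤ Real.cosh (ν * t) := by
      rw [Real.abs_sinh, ← Real.cosh_abs (x := ν * t)]
      exact (Real.sinh_lt_cosh _).le
    have h1 : Real.exp (-x * Real.cosh t) * |Real.sinh (ν * t)|
        ≤ Real.exp (-x * Real.cosh t) * Real.cosh (ν * t) :=
      mul_le_mul_of_nonneg_left hs (Real.exp_pos _).le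
    have h2 : Real.exp (-x * Real.cosh t) * Real.cosh (ν * t)
        ≤ Real.exp (-x * Real.cosh t) * Real.cosh (ν * t) * Real.exp t := by
      have h0 := mul_le_mul_of_nonneg_left (Real.one_le_exp ht)
        (mul_nonneg (Real.exp_pos (-x * Real.cosh t)).le (Real.cosh_pos (x := ν * t)).le)
      linarith
    linarith

lemma besselK_recurrence (ν : ℝ) {x : ℝ} (hx : 0 < x) :
    besselK (ν + 1) x - besselK (ν - 1) x = 2 * ν / x * besselK ν x := by
  have hderiv : ∀ t : ℝ, HasDerivAt
      (fun t => Real.exp (-x * Real.cosh t) * Real.sinh (ν * t))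
      (ν * (Real.exp (-x * Real.cosh t) * Real.cosh (ν * t))
        - x / 2 * (Real.exp (-x * Real.cosh t) * Real.cosh ((ν + 1) * t)
          - Real.exp (-x * Real.cosh t) * Real.cosh ((ν - 1) * t))) t := by
    intro t
    have h1 : HasDerivAt (fun t : ℝ => -x * Real.cosh t) (-x * Real.sinh t) t :=
      (Real.hasDerivAt_cosh t).const_mul (-x)
    have h2 : HasDerivAt (fun t : ℝ => Real.sinh (ν * t)) (Real.cosh (ν * t) * ν) t := by
      simpa using ((hasDerivAt_id t).const_mul ν).sinh
    have h3 := (h1.exp).mul h2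
    refine h3.congr_deriv (Eq.symm ?_)
    have hs := sinh_mul_sinh ν t
    linear_combination ((x : ℝ) * Real.exp (-x * Real.cosh t)) * hs
  have hint : IntegrableOn (fun t : ℝ =>
      ν * (Real.exp (-x * Real.cosh t) * Real.cosh (ν * t))
        - x / 2 * (Real.exp (-x * Real.cosh t) * Real.cosh ((ν + 1) * t)
          - Real.exp (-x * Real.cosh t) * Real.cosh ((ν - 1) * t))) (Ioi (0 : ℝ)) :=
    ((besselK_integrableOn ν hx).const_mul ν).sub
      (((besselK_integrableOn (ν + 1) hx).sub (besselK_integrableOn (ν - 1) hx)).const_mul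
        (x / 2))
  have hFTC := integral_Ioi_of_hasDerivAt_of_tendsto
    (f := fun t => Real.exp (-x * Real.cosh t) * Real.sinh (ν * t))
    (Continuous.continuousWithinAt (by continuity))
    (fun t _ => hderiv t) hint (sinh_tendsto ν hx)
  have hA := besselK_integrableOn (ν + 1) hx
  have hB := besselK_integrableOn (ν - 1) hx
  have h1' : IntegrableOn (fun t : ℝ =>
      ν * (Real.exp (-x * Real.cosh t) * Real.cosh (ν * t))) (Ioi (0 : ℝ)) :=
    (besselK_integrableOn ν hx).const_mul ν
  have h2' : IntegrableOn (fun t : ℝ =>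
      x / 2 * (Real.exp (-x * Real.cosh t) * Real.cosh ((ν + 1) * t)
        - Real.exp (-x * Real.cosh t) * Real.cosh ((ν - 1) * t))) (Ioi (0 : ℝ)) :=
    (hA.sub hB).const_mul (x / 2)
  rw [MeasureTheory.integral_sub h1' h2', MeasureTheory.integral_const_mul,
    MeasureTheory.integral_const_mul, MeasureTheory.integral_sub hA hB] at hFTC
  have hkey : ν * besselK ν x - x / 2 * (besselK (ν + 1) x - besselK (ν - 1) x) = 0 := by
    simpa [besselK] using hFTC
  field_simp
  linarith

lemma hasDerivAt_rpow_besselK (ν : ℝ) {x : ℝ} (hx : 0 < x) :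
    HasDerivAt (fun y => y ^ ν * besselK ν y) (-(x ^ ν * besselK (ν - 1) x)) x := by
  have h1 : HasDerivAt (fun y : ℝ => y ^ ν) (ν * x ^ (ν - 1)) x :=
    Real.hasDerivAt_rpow_const (Or.inl hx.ne')
  have h3 := h1.mul (besselK_hasDerivAt ν hx)
  refine h3.congr_deriv (Eq.symm ?_)
  have hrec := besselK_recurrence ν hx
  have hK : besselK (ν + 1) x = 2 * ν / x * besselK ν x + besselK (ν - 1) x := by linarith
  have hxν : x ^ ν = x ^ (ν - 1) * x := by
    rw [← Real.rpow_add_one hx.ne' (ν - 1)]; ring_nf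
  rw [hK, hxν]
  field_simp
  ring



end Aux

open MeasureTheory Filter Set Asymptotics Topology in
/-- The Matérn covariance function on `ℝ²` is partially differentiable at every `h ≠ 0`, with
`∂C_κ^ν/∂h_i (h) = −(h_i/(2ν))·C_κ^{ν−1}(h)`. -/
theorem matern_deriv (κ φ ν : ℝ) (hκ : 0 < κ) (hφ : 0 < φ) (hν : 0 < ν)
    (h : EuclideanSpace ℝ (Fin 2)) (hh : h ≠ 0) (i : Fin 2) :
    HasDerivAt (fun t : ℝ => matern κ φ ν (h + t • EuclideanSpace.single i 1))
      (-(h i / (2 * ν)) * matern κ φ (ν - 1) h) 0 := by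
  have hnorm_pos : (0:ℝ) < ‖h‖ := norm_pos_iff.2 hh
  set C : ℝ := 2 ^ (1 - ν) * φ ^ 2 / (4 * π * Real.Gamma (ν + 1) * κ ^ (2 * ν)) with hC
  have hqnorm : ∀ t : ℝ, ‖h + t • EuclideanSpace.single i (1:ℝ)‖
      = Real.sqrt (‖h‖ ^ 2 + 2 * h i * t + t ^ 2) := by
    intro t
    rw [← Real.sqrt_sq (norm_nonneg (h + t • EuclideanSpace.single i (1:ℝ)))]
    congr 1
    rw [norm_add_sq_real]
    have h1 : (inner ℝ h (t • EuclideanSpace.single i (1:ℝ)) : ℝ) = t * h i := by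
      rw [real_inner_smul_right, EuclideanSpace.inner_single_right]
      simp
    rw [h1, norm_smul, EuclideanSpace.norm_single]
    simp [sq_abs]
    ring
  -- derivative of G(y) = (κ y)^ν K_ν(κ y) at ‖h‖
  have hκn : (0:ℝ) < κ * ‖h‖ := by positivity
  have hmul : HasDerivAt (fun y : ℝ => κ * y) κ ‖h‖ := by
    simpa using (hasDerivAt_id ‖h‖).const_mul κ
  have hg : HasDerivAt (fun y : ℝ => (κ * y) ^ ν * besselK ν (κ * y))
      (-((κ * ‖h‖) ^ ν * besselK (ν - 1) (κ * ‖h‖)) * κ) ‖h‖ := by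
    have := (hasDerivAt_rpow_besselK ν hκn).comp ‖h‖ hmul
    simpa [Function.comp_def] using this
  have hq' : HasDerivAt (fun t : ℝ => ‖h‖ ^ 2 + 2 * h i * t + t ^ 2) (2 * h i) 0 := by
    have := (((hasDerivAt_id (0:ℝ)).const_mul (2 * h i)).const_add (‖h‖ ^ 2)).add
      (hasDerivAt_pow 2 (0:ℝ))
    simpa [Pi.add_def] using this
  have hpt : Real.sqrt (‖h‖ ^ 2 + 2 * h i * 0 + 0 ^ 2) = ‖h‖ := by
    rw [show ‖h‖ ^ 2 + 2 * h i * 0 + 0 ^ 2 = ‖h‖ ^ 2 by ring, Real.sqrt_sq hnorm_pos.le]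
  have hs : HasDerivAt (fun t : ℝ => Real.sqrt (‖h‖ ^ 2 + 2 * h i * t + t ^ 2))
      (1 / (2 * ‖h‖) * (2 * h i)) 0 := by
    have hq0 : ‖h‖ ^ 2 + 2 * h i * 0 + 0 ^ 2 ≠ 0 := by
      rw [show ‖h‖ ^ 2 + 2 * h i * 0 + 0 ^ 2 = ‖h‖ ^ 2 by ring]; positivity
    have := (Real.hasDerivAt_sqrt hq0).comp 0 hq'
    simpa [Function.comp_def, hpt] using this
  have hg' : HasDerivAt (fun y : ℝ => (κ * y) ^ ν * besselK ν (κ * y))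
      (-((κ * ‖h‖) ^ ν * besselK (ν - 1) (κ * ‖h‖)) * κ)
      (Real.sqrt (‖h‖ ^ 2 + 2 * h i * 0 + 0 ^ 2)) := by rw [hpt]; exact hg
  have hcomp := ((hg'.comp 0 hs).const_mul C)
  have hfun : (fun t : ℝ => matern κ φ ν (h + t • EuclideanSpace.single i 1))
      = fun t : ℝ => C * ((κ * Real.sqrt (‖h‖ ^ 2 + 2 * h i * t + t ^ 2)) ^ ν
          * besselK ν (κ * Real.sqrt (‖h‖ ^ 2 + 2 * h i * t + t ^ 2))) := by
    funext t
    rw [matern, hqnorm t, hC, mul_assoc]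
  rw [hfun]
  refine hcomp.congr_deriv (Eq.symm ?_)
  -- value identity
  have hGamma : Real.Gamma (ν + 1) = ν * Real.Gamma ν := Real.Gamma_add_one hν.ne'
  have hGamma2 : Real.Gamma (ν - 1 + 1) = Real.Gamma ν := by rw [sub_add_cancel]
  have h2p : (2:ℝ) ^ (1 - (ν - 1)) = 2 ^ (1 - ν) * 2 := by
    rw [show (1 - (ν - 1)) = (1 - ν) + 1 by ring, Real.rpow_add_one two_ne_zero]
  have hκ2 : κ ^ ((2:ℝ)) = κ * κ := by
    rw [show (2:ℝ) = (1:ℝ) + 1 by norm_num, Real.rpow_add hκ, Real.rpow_one]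
  have hκp : κ ^ (2 * ν) = κ ^ (2 * (ν - 1)) * (κ * κ) := by
    rw [show (2 * ν) = (2 * (ν - 1)) + 2 by ring, Real.rpow_add hκ, hκ2]
  have hpow : (κ * ‖h‖) ^ ν = (κ * ‖h‖) ^ (ν - 1) * (κ * ‖h‖) := by
    have := Real.rpow_add_one hκn.ne' (ν - 1)
    rwa [show (ν - 1) + 1 = ν by ring] at this
  rw [matern, hGamma2, h2p, hC, hGamma, hκp, hpow]
  have hπ := Real.pi_ne_zero
  have hG := (Real.Gamma_pos_of_pos hν).ne'
  have hr1 : ((2:ℝ) ^ (1 - ν)) ≠ 0 := (Real.rpow_pos_of_pos two_pos _).ne'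
  have hr2 : (κ ^ (2 * (ν - 1))) ≠ 0 := (Real.rpow_pos_of_pos hκ _).ne'
  field_simp
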